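/- Let V and W be subspaces of ℝ^n with orthogonal projections P_V and P_W. Define θ(v, V) as the angle between a nonzero vector v and the subspace V. Then for any nonzero v with P_V v ≠ 0, θ(v, W) ≤ θ(v, V) + θ(P_V v, W). -/

import Mathlib

open InnerProductGeometry Real

section AngleTriangle

variable {E : Type*} [NormedAddCommGroup E] [InnerProductSpace ℝ E]

local notation "⟪" x ", " y "⟫" => @inner ℝ _ _ x y

lemma key_ineq {x y z : E} (hx : ‖x‖ = 1) (hy : ‖y‖ = 1) (hz : ‖z‖ = 1) :
    ⟪x, y⟫ * ⟪y, z⟫ - Real.sqrt (1 - ⟪x, y⟫ ^ 2) * Real.sqrt (1 - ⟪y, z⟫ ^ 2) ≤ ⟪x, z⟫ := by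
  set a : ℝ := ⟪x, y⟫
  set c : ℝ := ⟪y, z⟫
  have h1 : ⟪x - a • y, z - c • y⟫ = ⟪x, z⟫ - a * c := by
    simp [inner_sub_left, inner_sub_right, inner_smul_left, inner_smul_right,
      real_inner_self_eq_norm_sq, hy, real_inner_comm y z]
    ring
  have h2 : ‖x - a • y‖ = Real.sqrt (1 - a ^ 2) := by
    rw [show (1 : ℝ) - a ^ 2 = ‖x - a • y‖ ^ 2 by
      rw [norm_sub_sq_real]; simp [inner_smul_right, norm_smul, real_inner_self_eq_norm_sq, hx, hy]
      ring]
    rw [Real.sqrt_sq (norm_nonneg _)]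
  have h3 : ‖z - c • y‖ = Real.sqrt (1 - c ^ 2) := by
    rw [show (1 : ℝ) - c ^ 2 = ‖z - c • y‖ ^ 2 by
      rw [norm_sub_sq_real]; simp [inner_smul_right, norm_smul, real_inner_self_eq_norm_sq, hz, hy,
        real_inner_comm y z]
      ring]
    rw [Real.sqrt_sq (norm_nonneg _)]
  have h4 := abs_real_inner_le_norm (x - a • y) (z - c • y)
  rw [h1, h2, h3] at h4
  linarith [neg_abs_le (⟪x, z⟫ - a * c)]

lemma angle_triangle_unit {x y z : E} (hx : ‖x‖ = 1) (hy : ‖y‖ = 1) (hz : ‖z‖ = 1) :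
    angle x z ≤ angle x y + angle y z := by
  rcases le_or_gt π (angle x y + angle y z) with h | h
  · exact (angle_le_pi x z).trans h
  · have hsum0 : 0 ≤ angle x y + angle y z := by
      have := angle_nonneg x y; have := angle_nonneg y z; linarith
    have hcos : Real.cos (angle x y + angle y z) ≤ ⟪x, z⟫ := by
      rw [Real.cos_add]
      have cxy : Real.cos (angle x y) = ⟪x, y⟫ := by rw [cos_angle, hx, hy]; simp
      have cyz : Real.cos (angle y z) = ⟪y, z⟫ := by rw [cos_angle, hy, hz]; simp
      have sxy : Real.sin (angle x y) = Real.sqrt (1 - ⟪x, y⟫ ^ 2) := by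
        rw [angle, Real.sin_arccos, hx, hy]; simp
      have syz : Real.sin (angle y z) = Real.sqrt (1 - ⟪y, z⟫ ^ 2) := by
        rw [angle, Real.sin_arccos, hy, hz]; simp
      rw [cxy, cyz, sxy, syz]
      exact key_ineq hx hy hz
    have hxz : angle x z = Real.arccos ⟪x, z⟫ := by rw [angle, hx, hz]; simp
    rw [hxz]
    calc Real.arccos ⟪x, z⟫ ≤ Real.arccos (Real.cos (angle x y + angle y z)) := by
          rw [Real.arccos_eq_pi_div_two_sub_arcsin, Real.arccos_eq_pi_div_two_sub_arcsin]
          linarith [Real.monotone_arcsin hcos]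
      _ = angle x y + angle y z := Real.arccos_cos hsum0 h.le

/-- Triangle inequality for unoriented angles. -/
lemma angle_triangle {x y z : E} (hx : x ≠ 0) (hy : y ≠ 0) (hz : z ≠ 0) :
    angle x z ≤ angle x y + angle y z := by
  have nx : (0:ℝ) < ‖x‖ := norm_pos_iff.mpr hx
  have ny : (0:ℝ) < ‖y‖ := norm_pos_iff.mpr hy
  have nz : (0:ℝ) < ‖z‖ := norm_pos_iff.mpr hz
  have h := angle_triangle_unit (x := ‖x‖⁻¹ • x) (y := ‖y‖⁻¹ • y) (z := ‖z‖⁻¹ • z)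
    (by rw [norm_smul, norm_inv, norm_norm]; field_simp) (by rw [norm_smul, norm_inv, norm_norm]; field_simp)
    (by rw [norm_smul, norm_inv, norm_norm]; field_simp)
  simpa [angle_smul_left_of_pos, angle_smul_right_of_pos, inv_pos.mpr nx, inv_pos.mpr ny,
    inv_pos.mpr nz] using h

end AngleTriangle

/-- The angle between a nonzero vector `v` and a subspace `V`,
defined as `arccos (‖P_V v‖ / ‖v‖)`. -/
noncomputable def angleToSubspace {n : ℕ}
    (V : Submodule ℝ (EuclideanSpace ℝ (Fin n)))
    (v : EuclideanSpace ℝ (Fin n)) : ℝ :=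
  Real.arccos (‖((Submodule.orthogonalProjectionOnto V v : V) : EuclideanSpace ℝ (Fin n))‖ / ‖v‖)

section Euclid

variable {n : ℕ}

local notation "⟪" x ", " y "⟫" => @inner ℝ _ _ x y

lemma inner_self_proj (V : Submodule ℝ (EuclideanSpace ℝ (Fin n)))
    (v : EuclideanSpace ℝ (Fin n)) :
    ⟪v, ((Submodule.orthogonalProjectionOnto V v : V) : EuclideanSpace ℝ (Fin n))⟫
      = ‖((Submodule.orthogonalProjectionOnto V v : V) : EuclideanSpace ℝ (Fin n))‖ ^ 2 := by
  have h := Submodule.inner_orthogonalProjectionOnto_eq_of_mem_right (𝕜 := ℝ) (K := V) (Submodule.orthogonalProjectionOnto V v) v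
  rw [Submodule.coe_inner] at h
  rw [← h, real_inner_self_eq_norm_sq]

/-- The angle to a subspace equals the angle to the projection, when both are nonzero. -/
lemma angleToSubspace_eq_angle (V : Submodule ℝ (EuclideanSpace ℝ (Fin n)))
    (v : EuclideanSpace ℝ (Fin n)) (hv : v ≠ 0)
    (hPv : ((Submodule.orthogonalProjectionOnto V v : V) : EuclideanSpace ℝ (Fin n)) ≠ 0) :
    angleToSubspace V v
      = InnerProductGeometry.angle v
          ((Submodule.orthogonalProjectionOnto V v : V) : EuclideanSpace ℝ (Fin n)) := by
  set u : EuclideanSpace ℝ (Fin n) := ((Submodule.orthogonalProjectionOnto V v : V) : EuclideanSpace ℝ (Fin n))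
    with hu
  have nu : (0:ℝ) < ‖u‖ := norm_pos_iff.mpr hPv
  have nv : (0:ℝ) < ‖v‖ := norm_pos_iff.mpr hv
  rw [angleToSubspace, InnerProductGeometry.angle, ← hu, inner_self_proj]
  congr 1
  field_simp
  ring

/-- Any vector of `W` makes an angle at least `angleToSubspace W v` with `v`. -/
lemma angleToSubspace_le_angle (W : Submodule ℝ (EuclideanSpace ℝ (Fin n)))
    (v w : EuclideanSpace ℝ (Fin n)) (hv : v ≠ 0) (hw : w ≠ 0) (hwW : w ∈ W) :
    angleToSubspace W v ≤ InnerProductGeometry.angle v w := by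
  set p : EuclideanSpace ℝ (Fin n) := ((Submodule.orthogonalProjectionOnto W v : W) : EuclideanSpace ℝ (Fin n))
  have nv : (0:ℝ) < ‖v‖ := norm_pos_iff.mpr hv
  have nw : (0:ℝ) < ‖w‖ := norm_pos_iff.mpr hw
  have hineq : ⟪v, w⟫ ≤ ‖p‖ * ‖w‖ := by
    have h := Submodule.inner_orthogonalProjectionOnto_eq_of_mem_right (𝕜 := ℝ) (K := W) (⟨w, hwW⟩ : W) v
    rw [Submodule.coe_inner] at h
    rw [← h]
    exact (le_abs_self _).trans (abs_real_inner_le_norm _ _)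
  rw [angleToSubspace, InnerProductGeometry.angle]
  rw [Real.arccos_eq_pi_div_two_sub_arcsin, Real.arccos_eq_pi_div_two_sub_arcsin]
  have hdiv : ⟪v, w⟫ / (‖v‖ * ‖w‖) ≤ ‖p‖ / ‖v‖ := by
    rw [div_le_div_iff₀ (by positivity) nv]
    calc ⟪v, w⟫ * ‖v‖ ≤ ‖p‖ * ‖w‖ * ‖v‖ := by nlinarith
      _ = ‖p‖ * (‖v‖ * ‖w‖) := by ring
  linarith [Real.monotone_arcsin hdiv]

end Euclid

/-- Lower-bound half of the perturbation angle theorem (Theorem 2 of the paper,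
rearranged): `θ̂ ≤ θ + θ₁*`, i.e. for subspaces `V, W` of `ℝⁿ` and any nonzero `v`
with `P_V v ≠ 0`, `θ(v, W) ≤ θ(v, V) + θ(P_V v, W)`. -/
theorem angleToSubspace_le_add (n : ℕ)
    (V W : Submodule ℝ (EuclideanSpace ℝ (Fin n)))
    (v : EuclideanSpace ℝ (Fin n)) (hv : v ≠ 0)
    (hPv : ((Submodule.orthogonalProjectionOnto V v : V) : EuclideanSpace ℝ (Fin n)) ≠ 0) :
    angleToSubspace W v ≤
      angleToSubspace V v +
        angleToSubspace W ((Submodule.orthogonalProjectionOnto V v : V) : EuclideanSpace ℝ (Fin n)) := by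
  set u : EuclideanSpace ℝ (Fin n) := ((Submodule.orthogonalProjectionOnto V v : V) : EuclideanSpace ℝ (Fin n))
    with hu
  set w : EuclideanSpace ℝ (Fin n) := ((Submodule.orthogonalProjectionOnto W u : W) : EuclideanSpace ℝ (Fin n))
    with hwdef
  have hVangle : angleToSubspace V v = InnerProductGeometry.angle v u :=
    angleToSubspace_eq_angle V v hv hPv
  by_cases hw : w = 0
  · -- `P_W u = 0`, so `θ(u, W) = π/2` and `θ(v, W) ≤ π/2`.
    have h1 : angleToSubspace W u = Real.pi / 2 := by
      rw [angleToSubspace, ← hwdef, hw]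
      simp [Real.arccos_zero]
    have h2 : angleToSubspace W v ≤ Real.pi / 2 := by
      rw [angleToSubspace, Real.arccos_eq_pi_div_two_sub_arcsin]
      have h0 : (0:ℝ)
          ≤ ‖((Submodule.orthogonalProjectionOnto W v : W) : EuclideanSpace ℝ (Fin n))‖ / ‖v‖ := by positivity
      linarith [Real.arcsin_nonneg.mpr h0]
    have h3 : 0 ≤ InnerProductGeometry.angle v u := InnerProductGeometry.angle_nonneg v u
    rw [hVangle, h1]
    linarith
  · have hWangle : angleToSubspace W u = InnerProductGeometry.angle u w :=
      angleToSubspace_eq_angle W u hPv hw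
    have hle : angleToSubspace W v ≤ InnerProductGeometry.angle v w :=
      angleToSubspace_le_angle W v w hv hw (by rw [hwdef]; exact Submodule.coe_mem _)
    have htri : InnerProductGeometry.angle v w
        ≤ InnerProductGeometry.angle v u + InnerProductGeometry.angle u w :=
      angle_triangle hv hPv hw
    rw [hVangle, hWangle]
    linarith
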